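/- In a directed graph satisfying the descending chain condition (every directed path starting at any vertex has finite length) and the diamond condition (any two directed edges starting at the same vertex can be extended to directed paths ending at a common vertex), every connected component of the graph has a unique terminal vertex (a vertex with no outgoing edges). -/

import Mathlib

open Relation

/-- **Diamond Lemma.** In a directed graph (vertex type `V`, edge relation `E`)
satisfying the descending chain condition (no infinite directed path, i.e. the
reversed edge relation is well-founded) and the diamond condition (any two
directed edges out of a vertex extend to directed paths with a common endpoint),
every connected component (connectivity taken in the underlying undirected
graph) contains a unique terminal vertex (one with no outgoing edges). -/
theorem diamond_lemma {V : Type*} (E : V → V → Prop)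
    (dcc : WellFounded (fun a b => E b a))
    (diamond : ∀ x y z : V, E x y → E x z →
      ∃ w : V, ReflTransGen E y w ∧ ReflTransGen E z w) :
    ∀ x : V, ∃! t : V,
      (∀ u : V, ¬ E t u) ∧ ReflTransGen (fun a b => E a b ∨ E b a) x t := by
  -- Newman's lemma: confluence
  have conf : ∀ a b c : V, ReflTransGen E a b → ReflTransGen E a c →
      Join (ReflTransGen E) b c := by
    intro a
    induction a using dcc.induction with
    | _ a ih =>
      intro b c hab hac
      rcases hab.cases_head with rfl | ⟨b1, hb1, hb1b⟩
      · exact ⟨c, hac, ReflTransGen.refl⟩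
      rcases hac.cases_head with rfl | ⟨c1, hc1, hc1c⟩
      · exact ⟨b, ReflTransGen.refl, ReflTransGen.head hb1 hb1b⟩
      obtain ⟨d, hbd, hcd⟩ := diamond a b1 c1 hb1 hc1
      obtain ⟨e, hbe, hde⟩ := ih b1 hb1 b d hb1b hbd
      obtain ⟨f, hef, hcf⟩ := ih c1 hc1 e c (hcd.trans hde) hc1c
      exact ⟨f, hbe.trans hef, hcf⟩
  have equiv : Equivalence (Join (ReflTransGen E)) :=
    equivalence_join
      (fun a b c hab hac => conf a b c hab hac)
  intro x
  -- existence of a terminal vertex reachable from x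
  have exist : ∀ y : V, ∃ t : V, (∀ u : V, ¬ E t u) ∧ ReflTransGen E y t := by
    intro y
    induction y using dcc.induction with
    | _ y ih =>
      by_cases h : ∃ u, E y u
      · obtain ⟨u, hu⟩ := h
        obtain ⟨t, ht, hut⟩ := ih u hu
        exact ⟨t, ht, ReflTransGen.head hu hut⟩
      · exact ⟨y, fun u hu => h ⟨u, hu⟩, ReflTransGen.refl⟩
  obtain ⟨t, ht, hxt⟩ := exist x
  have symm_of_E : ∀ a b : V, ReflTransGen E a b →
      ReflTransGen (fun a b => E a b ∨ E b a) a b := fun a b h =>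
    ReflTransGen.mono (fun _ _ h => Or.inl h) a b h
  -- terminal vertices reached via join are equal
  have term_eq : ∀ t1 t2 : V, (∀ u, ¬ E t1 u) → (∀ u, ¬ E t2 u) →
      Join (ReflTransGen E) t1 t2 → t1 = t2 := by
    rintro t1 t2 h1 h2 ⟨d, hd1, hd2⟩
    rcases hd1.cases_head with rfl | ⟨u, hu, _⟩
    · rcases hd2.cases_head with rfl | ⟨u, hu, _⟩
      · rfl
      · exact absurd hu (h2 u)
    · exact absurd hu (h1 u)
  refine ⟨t, ⟨ht, symm_of_E x t hxt⟩, ?_⟩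
  rintro t' ⟨ht', hxt'⟩
  have hjoin : Join (ReflTransGen E) t' t := by
    have h1 : Join (ReflTransGen E) x t' :=
      reflTransGen_of_equivalence equiv
        (fun a b (hab : E a b ∨ E b a) => hab.elim
          (fun h => ⟨b, ReflTransGen.single h, ReflTransGen.refl⟩)
          (fun h => ⟨a, ReflTransGen.refl, ReflTransGen.single h⟩)) x t' hxt'
    exact equiv.trans (equiv.symm h1) ⟨t, hxt, ReflTransGen.refl⟩
  exact term_eq t' t ht' ht hjoin
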